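/- Fix an integer N ≥ 1 and c₁, …, c_N ∈ ℂ with c_j ≠ 1 for each j, and let R(z,w) = (w − z²)^{2N+1} / ∏_{j=1}^N (w − c_j z²)². Fix μ ∈ ℂ, μ ≠ 0, and for τ ∈ ℂ set z(τ) = i·μ·τ·∏_{j=1}^N ((1 − c_j)τ² − 1) and w(τ) = −μ²·(τ² − 1)·∏_{j=1}^N ((1 − c_j)τ² − 1)². Then for every τ ∈ ℂ such that τ ≠ 0 and (1 − c_j)τ² − 1 ≠ 0 for all j, one has z(τ)² − w(τ) = (z(τ)/τ)² and R(z(τ), w(τ)) = μ². (Thus τ ↦ (z(τ), w(τ)) parametrizes the level curve {R = μ²}, and these level curves are rational.) -/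
import Mathlib


/-- Type a1 dual billiards: rational parametrization of the level curves
`{R = μ²}` of `R(z,w) = (w − z²)^{2N+1} / ∏_{j=1}^N (w − c_j z²)²`. -/
theorem stmt_0 (N : ℕ) (hN : 1 ≤ N) (c : Fin N → ℂ) (hc : ∀ j, c j ≠ 1)
    (μ : ℂ) (hμ : μ ≠ 0)
    (z w : ℂ → ℂ)
    (hz : ∀ τ : ℂ, z τ = Complex.I * μ * τ * ∏ j, ((1 - c j) * τ ^ 2 - 1))
    (hw : ∀ τ : ℂ, w τ = -μ ^ 2 * (τ ^ 2 - 1) * ∏ j, ((1 - c j) * τ ^ 2 - 1) ^ 2)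
    (τ : ℂ) (hτ : τ ≠ 0) (hfac : ∀ j, (1 - c j) * τ ^ 2 - 1 ≠ 0) :
    z τ ^ 2 - w τ = (z τ / τ) ^ 2 ∧
    (w τ - z τ ^ 2) ^ (2 * N + 1) / ∏ j, (w τ - c j * z τ ^ 2) ^ 2 = μ ^ 2 := by
  set P : ℂ := ∏ j, ((1 - c j) * τ ^ 2 - 1) with hP
  have hPne : P ≠ 0 := Finset.prod_ne_zero_iff.mpr fun j _ => hfac j
  have hP2 : (∏ j, ((1 - c j) * τ ^ 2 - 1) ^ 2) = P ^ 2 := by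
    rw [hP, ← Finset.prod_pow]
  have hz2 : z τ ^ 2 = -μ ^ 2 * τ ^ 2 * P ^ 2 := by
    rw [hz τ, ← hP]
    have : Complex.I ^ 2 = -1 := Complex.I_sq
    ring_nf
    rw [this]; ring
  have hwτ : w τ = -μ ^ 2 * (τ ^ 2 - 1) * P ^ 2 := by rw [hw τ, hP2]
  constructor
  · rw [hz2, hwτ, div_pow, hz2]
    field_simp
    ring
  · have hnum : w τ - z τ ^ 2 = μ ^ 2 * P ^ 2 := by rw [hz2, hwτ]; ring
    have hden : (∏ j, (w τ - c j * z τ ^ 2) ^ 2)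
        = (μ ^ 4 * P ^ 4) ^ N * P ^ 2 := by
      have : ∀ j : Fin N, (w τ - c j * z τ ^ 2) ^ 2
          = (μ ^ 4 * P ^ 4) * ((1 - c j) * τ ^ 2 - 1) ^ 2 := by
        intro j
        rw [hz2, hwτ]; ring
      rw [Finset.prod_congr rfl fun j _ => this j, Finset.prod_mul_distrib,
        Finset.prod_const, hP2, Finset.card_univ, Fintype.card_fin]
    rw [hnum, hden, div_eq_iff (mul_ne_zero (pow_ne_zero _
      (mul_ne_zero (pow_ne_zero _ hμ) (pow_ne_zero _ hPne))) (pow_ne_zero _ hPne))]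
    ring
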